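/- arXiv:2202.06445 — 2 statements merged into one kernel-verified Lean document; each statement's English description precedes it below -/
import Mathlib

section
/- Let $\delta \in (0,1)$ and let $G_\delta$ be as below. Then $G_\delta(s) \ge 0$ for all $s \in \mathbb{R}$, $G_\delta(1) = 0$, and $G_\delta(s) \ge \frac{s^2}{2\delta}$ for all $s \le 0$. -/
private lemma key_xlog (x : ℝ) (hx : 0 < x) : 0 ≤ x * (Real.log x - 1) + 1 := by
  have h := Real.log_le_sub_one_of_pos (x := x⁻¹) (by positivity)
  rw [Real.log_inv] at h
  have hxi : x * x⁻¹ = 1 := mul_inv_cancel₀ hx.ne'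
  nlinarith [mul_le_mul_of_nonneg_left h hx.le]

/-- For `δ ∈ (0,1)`, the function `G_δ` satisfies `G_δ(s) ≥ 0` for all
`s`, `G_δ(1) = 0`, and `G_δ(s) ≥ s²/(2δ)` for all `s ≤ 0`. -/
theorem stmt_8 (δ : ℝ) (hδ0 : 0 < δ) (hδ1 : δ < 1)
    (G : ℝ → ℝ)
    (hG : ∀ s : ℝ, G s = if s ≤ δ then
        (s ^ 2 - δ ^ 2) / (2 * δ) + s * (Real.log δ - 1) + 1
      else s * (Real.log s - 1) + 1) :
    (∀ s : ℝ, 0 ≤ G s) ∧ G 1 = 0 ∧ ∀ s : ℝ, s ≤ 0 → s ^ 2 / (2 * δ) ≤ G s := by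
  have hL : Real.log δ ≤ 0 := Real.log_nonpos hδ0.le hδ1.le
  have hGd : 0 ≤ δ * (Real.log δ - 1) + 1 := key_xlog δ hδ0
  refine ⟨?_, ?_, ?_⟩
  · intro s
    rw [hG s]
    split_ifs with h
    · have hid : (s ^ 2 - δ ^ 2) / (2 * δ) + s * (Real.log δ - 1) + 1
          = (s - δ) ^ 2 / (2 * δ) + (s - δ) * Real.log δ + (δ * (Real.log δ - 1) + 1) := by
        field_simp
        ring
      rw [hid]
      have h1 : 0 ≤ (s - δ) ^ 2 / (2 * δ) := by positivity
      have h2 : 0 ≤ (s - δ) * Real.log δ :=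
        by nlinarith [hL]
      linarith
    · exact key_xlog s (by linarith)
  · rw [hG 1]
    rw [if_neg (by linarith)]
    simp
  · intro s hs
    rw [hG s, if_pos (by linarith)]
    have hid : (s ^ 2 - δ ^ 2) / (2 * δ) + s * (Real.log δ - 1) + 1 - s ^ 2 / (2 * δ)
        = (1 - δ / 2) + (-s) * (1 - Real.log δ) := by
      field_simp
      ring
    have h2 : 0 ≤ (-s) * (1 - Real.log δ) := mul_nonneg (by linarith) (by linarith)
    linarith [hid]
end

section
/- Let $d$, $b$, $D$, $U$, $Z$, $M$ be as below, and assume there exist constants $c_1, c_2, c_3, c_4 > 0$ and $\gamma > 1$ such that $c_1(\sqrt{b} - |q|)^{\gamma} \le M(q) \le c_2(\sqrt{b} - |q|)^{\gamma}$ and $c_3 \le (\sqrt{b} - |q|)\, U'(\tfrac{1}{2}|q|^2) \le c_4$ for all $q \in D$. Then $\int_D \left[\,1 + \left(U(\tfrac{1}{2}|q|^2)\right)^2 + \left(U'(\tfrac{1}{2}|q|^2)\right)^2\,\right] M(q)\,\mathrm{d}q < \infty$. -/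
open MeasureTheory

open Set Metric
open scoped ENNReal

lemma aux_lintegral_Ioo (R p : ℝ) (hR : 0 < R) (hp : -1 < p) :
    ∫⁻ r in Set.Ioo (0:ℝ) R, ENNReal.ofReal ((R - r) ^ p) < ⊤ := by
  have h1 : IntervalIntegrable (fun s : ℝ => s ^ p) volume 0 R :=
    intervalIntegral.intervalIntegrable_rpow' hp
  have h2 : IntervalIntegrable (fun r : ℝ => (R - r) ^ p) volume 0 R := by
    simpa using (h1.comp_sub_left R).symm
  have h3 : IntegrableOn (fun r : ℝ => (R - r) ^ p) (Set.Ioo 0 R) volume :=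
    ((intervalIntegrable_iff_integrableOn_Ioc_of_le hR.le).mp h2).mono_set
      Set.Ioo_subset_Ioc_self
  have h4 := h3.2
  rw [HasFiniteIntegral] at h4
  exact lt_of_le_of_lt (lintegral_mono fun r => Real.ofReal_le_enorm _) h4

lemma aux_lintegral_ball (d : ℕ) (hd : 1 ≤ d) (R p : ℝ) (hR : 0 < R) (hp : -1 < p) :
    ∫⁻ x in Metric.ball (0 : EuclideanSpace ℝ (Fin d)) R,
      ENNReal.ofReal ((R - ‖x‖) ^ p) ∂volume < ⊤ := by
  set E := EuclideanSpace ℝ (Fin d)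
  have hnt : Nontrivial E := by
    refine Module.nontrivial_of_finrank_pos (R := ℝ) (M := E) ?_
    rw [finrank_euclideanSpace_fin]; exact hd
  set n : ℕ := Module.finrank ℝ E - 1 with hn
  have hgmeas : Measurable fun r : ℝ => ENNReal.ofReal ((R - r) ^ p) := by fun_prop
  set F : ℝ → ℝ≥0∞ := (Set.Iio R).indicator (fun r => ENNReal.ofReal ((R - r) ^ p)) with hF
  have hFmeas : Measurable F := hgmeas.indicator measurableSet_Iio
  have step1 : ∫⁻ x in Metric.ball (0 : E) R, ENNReal.ofReal ((R - ‖x‖) ^ p) ∂volume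
      = ∫⁻ x : E, F ‖x‖ ∂volume := by
    rw [← lintegral_indicator measurableSet_ball]
    congr 1 with x
    by_cases hx : ‖x‖ < R
    · rw [Set.indicator_of_mem (mem_ball_zero_iff.mpr hx), hF,
        Set.indicator_of_mem (Set.mem_Iio.mpr hx)]
    · rw [Set.indicator_of_notMem (fun h => hx (mem_ball_zero_iff.mp h)),
        hF, Set.indicator_of_notMem (fun h => hx (Set.mem_Iio.mp h))]
  have step2 : ∫⁻ x : ({(0:E)}ᶜ : Set E), F ‖x.1‖ ∂((volume : Measure E).comap Subtype.val)
      = ∫⁻ x : E, F ‖x‖ ∂volume := by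
    rw [lintegral_subtype_comap (MeasurableSet.singleton (0:E)).compl (fun a => F ‖a‖),
      MeasureTheory.restrict_compl_singleton _]
  have step3 : ∫⁻ x : ({(0:E)}ᶜ : Set E), F ‖x.1‖ ∂((volume : Measure E).comap Subtype.val)
      = ∫⁻ y : sphere (0:E) 1 × Set.Ioi (0:ℝ), F y.2
          ∂((volume : Measure E).toSphere.prod (Measure.volumeIoiPow n)) := by
    refine Eq.trans ?_ ((Measure.measurePreserving_homeomorphUnitSphereProd
      (volume : Measure E)).lintegral_comp_emb
      (Homeomorph.measurableEmbedding _) (fun y => F y.2))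
    congr 1 with a
    simp [homeomorphUnitSphereProd]
  have hf4 : AEMeasurable (fun y : sphere (0:E) 1 × Set.Ioi (0:ℝ) => F y.2)
      ((volume : Measure E).toSphere.prod (Measure.volumeIoiPow n)) :=
    ((hFmeas.comp measurable_subtype_coe).comp measurable_snd).aemeasurable
  have step4 : ∫⁻ y : sphere (0:E) 1 × Set.Ioi (0:ℝ), F y.2
        ∂((volume : Measure E).toSphere.prod (Measure.volumeIoiPow n))
      = (volume : Measure E).toSphere Set.univ * ∫⁻ r : Set.Ioi (0:ℝ), F r
          ∂(Measure.volumeIoiPow n) := by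
    rw [MeasureTheory.lintegral_prod _ hf4]
    simp only [Prod.snd]
    rw [lintegral_const, mul_comm]
  have hFsub : Measurable fun r : Set.Ioi (0:ℝ) => F r.1 :=
    hFmeas.comp measurable_subtype_coe
  have hdens : Measurable fun r : Set.Ioi (0:ℝ) => ENNReal.ofReal (r.1 ^ n) :=
    (measurable_subtype_coe.pow_const n).ennreal_ofReal
  have step5 : ∫⁻ r : Set.Ioi (0:ℝ), F r ∂(Measure.volumeIoiPow n)
      = ∫⁻ r in Set.Ioi (0:ℝ), ENNReal.ofReal (r ^ n) * F r ∂volume := by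
    rw [Measure.volumeIoiPow, lintegral_withDensity_eq_lintegral_mul _ hdens hFsub]
    rw [← lintegral_subtype_comap measurableSet_Ioi (fun r => ENNReal.ofReal (r ^ n) * F r)]
    rfl
  have step6 : ∫⁻ r in Set.Ioi (0:ℝ), ENNReal.ofReal (r ^ n) * F r ∂volume < ⊤ := by
    have hmono : ∀ r ∈ Set.Ioi (0:ℝ), ENNReal.ofReal (r ^ n) * F r
        ≤ Set.indicator (Set.Iio R)
          (fun r => ENNReal.ofReal (R ^ n) * ENNReal.ofReal ((R - r) ^ p)) r := by
      intro r hr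
      by_cases hrR : r < R
      · rw [Set.indicator_of_mem (Set.mem_Iio.mpr hrR), hF,
          Set.indicator_of_mem (Set.mem_Iio.mpr hrR)]
        exact mul_le_mul_left (ENNReal.ofReal_le_ofReal
          (pow_le_pow_left₀ (le_of_lt hr) hrR.le n)) _
      · rw [hF, Set.indicator_of_notMem (fun h => hrR (Set.mem_Iio.mp h)),
          Set.indicator_of_notMem (fun h => hrR (Set.mem_Iio.mp h)), mul_zero]
    refine lt_of_le_of_lt (setLIntegral_mono_ae ?_ (Filter.Eventually.of_forall hmono)) ?_
    · exact ((hgmeas.const_mul _).indicator measurableSet_Iio).aemeasurable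
    rw [lintegral_indicator measurableSet_Iio, Measure.restrict_restrict measurableSet_Iio,
      Set.Iio_inter_Ioi]
    have : ∫⁻ r in Set.Ioo (0:ℝ) R,
        ENNReal.ofReal (R ^ n) * ENNReal.ofReal ((R - r) ^ p) ∂volume
        = ENNReal.ofReal (R ^ n) * ∫⁻ r in Set.Ioo (0:ℝ) R,
            ENNReal.ofReal ((R - r) ^ p) ∂volume := by
      rw [lintegral_const_mul _ hgmeas]
    rw [this]
    exact ENNReal.mul_lt_top ENNReal.ofReal_lt_top (aux_lintegral_Ioo R p hR hp)
  have hfin : (volume : Measure E).toSphere Set.univ < ⊤ := measure_lt_top _ _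
  rw [step1, ← step2, step3, step4, step5]
  exact ENNReal.mul_lt_top hfin step6

set_option maxHeartbeats 1000000 in
/-- Under the FENE-type growth conditions on the normalized
Maxwellian `M` and the spring potential `U` on the ball `D = B(0, √b)`, the function
`q ↦ [1 + U(|q|²/2)² + U'(|q|²/2)²] M(q)` is integrable over `D`. -/
theorem stmt_11 (d : ℕ) (hd : 1 ≤ d) (b : ℝ) (hb : 0 < b)
    (U U' : ℝ → ℝ)
    (hU0 : U 0 = 0)
    (hUnn : ∀ x ∈ Set.Ico (0 : ℝ) (b / 2), 0 ≤ U x)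
    (hUderiv : ∀ x ∈ Set.Ico (0 : ℝ) (b / 2),
      HasDerivWithinAt U (U' x) (Set.Ico 0 (b / 2)) x)
    (hU'cont : ContinuousOn U' (Set.Ico 0 (b / 2)))
    (Z : ℝ)
    (hZint : IntegrableOn (fun q : EuclideanSpace ℝ (Fin d) =>
        Real.exp (-U (‖q‖ ^ 2 / 2))) (Metric.ball 0 (Real.sqrt b)))
    (hZ : Z = ∫ q in Metric.ball (0 : EuclideanSpace ℝ (Fin d)) (Real.sqrt b),
        Real.exp (-U (‖q‖ ^ 2 / 2)))
    (hZpos : 0 < Z)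
    (M : EuclideanSpace ℝ (Fin d) → ℝ)
    (hM : ∀ q ∈ Metric.ball (0 : EuclideanSpace ℝ (Fin d)) (Real.sqrt b),
        M q = Z⁻¹ * Real.exp (-U (‖q‖ ^ 2 / 2)))
    (c₁ c₂ c₃ c₄ γ : ℝ)
    (hc₁ : 0 < c₁) (hc₂ : 0 < c₂) (hc₃ : 0 < c₃) (hc₄ : 0 < c₄) (hγ : 1 < γ)
    (hMlow : ∀ q ∈ Metric.ball (0 : EuclideanSpace ℝ (Fin d)) (Real.sqrt b),
      c₁ * (Real.sqrt b - ‖q‖) ^ γ ≤ M q)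
    (hMup : ∀ q ∈ Metric.ball (0 : EuclideanSpace ℝ (Fin d)) (Real.sqrt b),
      M q ≤ c₂ * (Real.sqrt b - ‖q‖) ^ γ)
    (hU'low : ∀ q ∈ Metric.ball (0 : EuclideanSpace ℝ (Fin d)) (Real.sqrt b),
      c₃ ≤ (Real.sqrt b - ‖q‖) * U' (‖q‖ ^ 2 / 2))
    (hU'up : ∀ q ∈ Metric.ball (0 : EuclideanSpace ℝ (Fin d)) (Real.sqrt b),
      (Real.sqrt b - ‖q‖) * U' (‖q‖ ^ 2 / 2) ≤ c₄) :
    IntegrableOn (fun q : EuclideanSpace ℝ (Fin d) =>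
      (1 + (U (‖q‖ ^ 2 / 2)) ^ 2 + (U' (‖q‖ ^ 2 / 2)) ^ 2) * M q)
      (Metric.ball 0 (Real.sqrt b)) := by
  set R := Real.sqrt b with hRdef
  have hR : 0 < R := Real.sqrt_pos.mpr hb
  have hRsq : R ^ 2 = b := Real.sq_sqrt hb.le
  have hball : ∀ q : EuclideanSpace ℝ (Fin d), q ∈ Metric.ball (0 : EuclideanSpace ℝ (Fin d)) R →
      ‖q‖ ^ 2 / 2 ∈ Set.Ico (0:ℝ) (b/2) := by
    intro q hq
    have h1 : ‖q‖ < R := mem_ball_zero_iff.mp hq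
    have h0 : (0:ℝ) ≤ ‖q‖ := norm_nonneg q
    constructor
    · positivity
    · have h2 : ‖q‖ * ‖q‖ < R * R := mul_self_lt_mul_self h0 h1
      have h3 : ‖q‖ ^ 2 < b := by rw [pow_two, ← hRsq, pow_two]; exact h2
      linarith only [h3]
  set A : ℝ := |Real.log (Z * c₁)| with hA
  have hAnn : 0 ≤ A := abs_nonneg _
  set K : ℝ := c₂ * ((1 + 2*A^2) * b + 2*γ^2 + c₄^2) with hK
  have hKpos : 0 < K := by
    have h1 : 0 < (1 + 2*A^2) * b := mul_pos (by positivity) hb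
    have h2 : (0:ℝ) < 2*γ^2 + c₄^2 := by positivity
    exact mul_pos hc₂ (by linarith)
  -- pointwise bound
  have key : ∀ q ∈ Metric.ball (0 : EuclideanSpace ℝ (Fin d)) R,
      ‖(1 + (U (‖q‖ ^ 2 / 2)) ^ 2 + (U' (‖q‖ ^ 2 / 2)) ^ 2) * M q‖
        ≤ K * (R - ‖q‖) ^ (γ - 2) := by
    intro q hq
    have h1 : ‖q‖ < R := mem_ball_zero_iff.mp hq
    set t : ℝ := R - ‖q‖ with htdef
    set x : ℝ := ‖q‖ ^ 2 / 2 with hxdef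
    have ht : 0 < t := sub_pos.mpr h1
    have ht2 : t ≤ R := by have := norm_nonneg q; simp only [htdef]; linarith
    have hx := hball q hq
    have hUx : 0 ≤ U x := hUnn x hx
    have hM' := hM q hq
    have hMl := hMlow q hq
    have hMu := hMup q hq
    have hc3 := hU'low q hq
    have hc4 := hU'up q hq
    rw [← htdef] at hMl hMu hc3 hc4
    rw [← hxdef] at hM' hc3 hc4
    have htU : 0 ≤ t * U' x := le_trans hc₃.le hc3
    have hU'sq : t^2 * (U' x)^2 ≤ c₄^2 := by
      have h := mul_self_le_mul_self htU hc4
      calc t^2 * (U' x)^2 = (t * U' x) * (t * U' x) := by ring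
        _ ≤ c₄ * c₄ := h
        _ = c₄^2 := (sq c₄).symm
    have hMnn : 0 ≤ M q := by rw [hM']; positivity
    have htγ : t ^ γ = t ^ (γ - 2) * t ^ 2 := by
      rw [← Real.rpow_natCast t 2, ← Real.rpow_add ht]
      norm_num
    have htp : 0 < t ^ (γ - 2) := Real.rpow_pos_of_pos ht _
    have ht2b : t^2 ≤ b := by
      have h2 : t * t ≤ R * R := mul_self_le_mul_self ht.le ht2
      rw [pow_two, ← hRsq, pow_two]; exact h2
    -- bound on U x
    have hexp : Z * c₁ * t ^ γ ≤ Real.exp (-U x) := by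
      rw [hM'] at hMl
      have h2 := mul_le_mul_of_nonneg_left hMl hZpos.le
      have h3 : Z * (Z⁻¹ * Real.exp (-U x)) = Real.exp (-U x) := by
        field_simp
      rw [h3] at h2
      rw [mul_assoc]
      exact h2
    have htγpos : 0 < t ^ γ := Real.rpow_pos_of_pos ht _
    have hlog : Real.log (Z * c₁) + γ * Real.log t ≤ -U x := by
      have h := Real.log_le_log (mul_pos (mul_pos hZpos hc₁) htγpos) hexp
      rwa [Real.log_exp, Real.log_mul (mul_pos hZpos hc₁).ne' htγpos.ne',
        Real.log_rpow ht] at h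
    have hUb : U x ≤ A + γ * t⁻¹ := by
      have hlt : -Real.log t ≤ t⁻¹ := by
        have h := Real.log_le_sub_one_of_pos (inv_pos.mpr ht)
        rw [Real.log_inv] at h
        linarith only [h]
      have hA1 : -Real.log (Z*c₁) ≤ A := neg_le_abs _
      have h2 : γ * (-Real.log t) ≤ γ * t⁻¹ :=
        mul_le_mul_of_nonneg_left hlt (by linarith)
      linarith only [hlog, hA1, h2]
    have hinv : t⁻¹ * t = 1 := inv_mul_cancel₀ ht.ne'
    have hγ0 : (0:ℝ) < γ := by linarith
    have hU2 : U x ^ 2 ≤ (A + γ * t⁻¹) ^ 2 := by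
      have h := mul_self_le_mul_self hUx hUb
      calc U x ^ 2 = U x * U x := sq (U x)
        _ ≤ (A + γ * t⁻¹) * (A + γ * t⁻¹) := h
        _ = (A + γ * t⁻¹) ^ 2 := (sq _).symm
    have hUsq : (U x)^2 ≤ 2*A^2 + 2*γ^2 * t⁻¹^2 := by
      have h3 : 2*A*(γ*t⁻¹) ≤ A^2 + (γ*t⁻¹)^2 := two_mul_le_add_sq A (γ*t⁻¹)
      have h4 : (A + γ*t⁻¹)^2 = A^2 + 2*A*(γ*t⁻¹) + (γ*t⁻¹)^2 := by ring
      have h5 : (γ*t⁻¹)^2 = γ^2 * t⁻¹^2 := by ring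
      linarith only [hU2, h3, h4, h5]
    have hh : t⁻¹^2 * t^2 = 1 := by
      field_simp
    have e1 : U x^2 * t^2 ≤ 2*A^2*t^2 + 2*γ^2 := by
      have h := mul_le_mul_of_nonneg_right hUsq (sq_nonneg t)
      calc U x^2 * t^2 ≤ (2*A^2 + 2*γ^2 * t⁻¹^2) * t^2 := h
        _ = 2*A^2*t^2 + 2*γ^2 * (t⁻¹^2 * t^2) := by ring
        _ = 2*A^2*t^2 + 2*γ^2 := by rw [hh]; ring
    have e2 : 2*A^2*t^2 ≤ 2*A^2*b :=
      mul_le_mul_of_nonneg_left ht2b (by positivity)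
    have hP2 : (1 + U x^2 + U' x^2) * t^2 ≤ (1+2*A^2)*b + 2*γ^2 + c₄^2 := by
      have expand : (1 + U x^2 + U' x^2) * t^2 = t^2 + U x^2*t^2 + t^2*(U' x)^2 := by ring
      have expand2 : (1+2*A^2)*b + 2*γ^2 + c₄^2 = b + (2*A^2*b + 2*γ^2) + c₄^2 := by ring
      rw [expand, expand2]
      have e3 : U x^2*t^2 ≤ 2*A^2*b + 2*γ^2 := by linarith only [e1, e2]
      linarith only [e3, ht2b, hU'sq]
    have hnn : (0:ℝ) ≤ 1 + U x^2 + U' x^2 := by positivity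
    have habs : ‖(1 + U x ^ 2 + U' x ^ 2) * M q‖ = (1 + U x ^ 2 + U' x ^ 2) * M q :=
      Real.norm_of_nonneg (mul_nonneg hnn hMnn)
    rw [habs]
    calc (1 + U x ^ 2 + U' x ^ 2) * M q
        ≤ (1 + U x ^ 2 + U' x ^ 2) * (c₂ * t ^ γ) :=
          mul_le_mul_of_nonneg_left hMu hnn
      _ = c₂ * t ^ (γ-2) * ((1 + U x ^ 2 + U' x ^ 2) * t ^ 2) := by rw [htγ]; ring
      _ ≤ c₂ * t ^ (γ-2) * ((1+2*A^2)*b + 2*γ^2 + c₄^2) :=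
          mul_le_mul_of_nonneg_left hP2 (by positivity)
      _ = K * t ^ (γ-2) := by rw [hK]; ring
  -- measurability
  have hUcont : ContinuousOn U (Set.Ico 0 (b/2)) :=
    fun x hx => (hUderiv x hx).continuousWithinAt
  have hnormc : Continuous fun q : EuclideanSpace ℝ (Fin d) => ‖q‖ ^ 2 / 2 :=
    ((continuous_norm.pow 2).div_const 2)
  have hmaps : Set.MapsTo (fun q : EuclideanSpace ℝ (Fin d) => ‖q‖ ^ 2 / 2)
      (Metric.ball 0 R) (Set.Ico 0 (b/2)) := fun q hq => hball q hq
  have h1 : ContinuousOn (fun q : EuclideanSpace ℝ (Fin d) => U (‖q‖ ^ 2 / 2))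
      (Metric.ball 0 R) := hUcont.comp hnormc.continuousOn hmaps
  have h2 : ContinuousOn (fun q : EuclideanSpace ℝ (Fin d) => U' (‖q‖ ^ 2 / 2))
      (Metric.ball 0 R) := hU'cont.comp hnormc.continuousOn hmaps
  have hg : ContinuousOn (fun q : EuclideanSpace ℝ (Fin d) =>
      (1 + (U (‖q‖ ^ 2 / 2)) ^ 2 + (U' (‖q‖ ^ 2 / 2)) ^ 2)
        * (Z⁻¹ * Real.exp (-U (‖q‖ ^ 2 / 2)))) (Metric.ball 0 R) :=
    ((continuousOn_const.add (h1.pow 2)).add (h2.pow 2)).mul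
      (continuousOn_const.mul (Real.continuous_exp.comp_continuousOn h1.neg))
  have haesm : AEStronglyMeasurable (fun q : EuclideanSpace ℝ (Fin d) =>
      (1 + (U (‖q‖ ^ 2 / 2)) ^ 2 + (U' (‖q‖ ^ 2 / 2)) ^ 2) * M q)
      (volume.restrict (Metric.ball 0 R)) := by
    refine (hg.aestronglyMeasurable measurableSet_ball).congr ?_
    refine (ae_restrict_iff' measurableSet_ball).mpr (ae_of_all _ fun q hq => ?_)
    simp only [hM q hq]
  refine ⟨haesm, ?_⟩
  rw [HasFiniteIntegral]
  have hbound : ∫⁻ q in Metric.ball (0 : EuclideanSpace ℝ (Fin d)) R,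
      (‖(1 + (U (‖q‖ ^ 2 / 2)) ^ 2 + (U' (‖q‖ ^ 2 / 2)) ^ 2) * M q‖₊ : ℝ≥0∞) ∂volume
      ≤ ∫⁻ q in Metric.ball (0 : EuclideanSpace ℝ (Fin d)) R,
        ENNReal.ofReal K * ENNReal.ofReal ((R - ‖q‖) ^ (γ - 2)) ∂volume := by
    refine setLIntegral_mono_ae ?_ (Filter.Eventually.of_forall fun q hq => ?_)
    · exact ((((measurable_const.sub measurable_norm).pow_const
        (γ-2)).ennreal_ofReal).const_mul _).aemeasurable
    · rw [← enorm_eq_nnnorm, ← ofReal_norm, ← ENNReal.ofReal_mul hKpos.le]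
      exact ENNReal.ofReal_le_ofReal (key q hq)
  refine lt_of_le_of_lt hbound ?_
  rw [lintegral_const_mul
      (f := fun q : EuclideanSpace ℝ (Fin d) => ENNReal.ofReal ((R - ‖q‖) ^ (γ - 2))) _
      (((measurable_const.sub measurable_norm).pow_const
      (γ-2)).ennreal_ofReal)]
  exact ENNReal.mul_lt_top ENNReal.ofReal_lt_top
    (aux_lintegral_ball d hd R (γ-2) hR (by linarith))
end
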